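/- Let K be a compact topological group and let (μ_t)_{t∈ℝ} be a family of continuous finite-dimensional linear representations of K on a fixed finite-dimensional real vector space V, depending continuously on t (i.e., the map ℝ × K → GL(V) is continuous). Then for all real numbers t₁, t₂, the representations μ_{t₁} and μ_{t₂} are conjugate (isomorphic as representations). -/

import Mathlib

open MeasureTheory Measure ContinuousLinearMap

lemma conj_of_close {K : Type*} [Group K] [TopologicalSpace K] [IsTopologicalGroup K]
    [CompactSpace K]
    {V : Type*} [NormedAddCommGroup V] [NormedSpace ℝ V] [FiniteDimensional ℝ V]
    (ρ σ : K →* (V ≃L[ℝ] V))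
    (hρ : Continuous fun k => ((ρ k : V →L[ℝ] V)))
    (hσ : Continuous fun k => ((σ k : V →L[ℝ] V)))
    (c : ℝ) (hc : c < 1)
    (hclose : ∀ k, ‖((σ k : V →L[ℝ] V)).comp ((ρ k⁻¹ : V →L[ℝ] V)) - 1‖ ≤ c) :
    ∃ A : V ≃L[ℝ] V, ∀ k v, σ k (A v) = A (ρ k v) := by
  letI : MeasurableSpace K := borel K
  haveI : BorelSpace K := ⟨rfl⟩
  haveI : Nonempty K := ⟨1⟩
  set ν : Measure K := haarMeasure ⊤ with hν
  haveI : IsProbabilityMeasure ν := by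
    constructor
    rw [hν, ← TopologicalSpace.PositiveCompacts.coe_top (α := K)]
    exact haarMeasure_self
  set f : K → (V →L[ℝ] V) := fun k => ((σ k : V →L[ℝ] V)).comp ((ρ k⁻¹ : V →L[ℝ] V)) with hf
  have hρinv : Continuous fun k : K => ((ρ k⁻¹ : V →L[ℝ] V)) := hρ.comp continuous_inv
  have hfc : Continuous f := hσ.clm_comp hρinv
  have hfi : Integrable f ν :=
    hfc.integrable_of_hasCompactSupport (isClosed_tsupport f).isCompact
  set A : V →L[ℝ] V := ∫ k, f k ∂ν with hA
  have hAnorm : ‖A - 1‖ ≤ c := by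
    have : A - 1 = ∫ k, (f k - 1) ∂ν := by
      rw [integral_sub hfi (integrable_const _), hA, integral_const]
      simp
    rw [this]
    exact norm_integral_le_of_norm_le_const (Filter.Eventually.of_forall fun k => hclose k)
      |>.trans (by simp)
  -- invertibility
  have ht : ‖(1 : V →L[ℝ] V) - A‖ < 1 := by
    rw [norm_sub_rev]; exact hAnorm.trans_lt hc
  set u : (V →L[ℝ] V)ˣ := Units.oneSub _ ht with hu
  have huA : (u : V →L[ℝ] V) = A := by
    rw [hu, Units.val_oneSub, sub_sub_cancel]
  set E : V ≃L[ℝ] V := ContinuousLinearEquiv.unitsEquiv ℝ V u with hE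
  have hEA : ∀ v, E v = A v := by
    intro v
    rw [hE, ContinuousLinearEquiv.unitsEquiv_apply, huA]
  -- intertwining
  have key : ∀ g : K, ((σ g : V →L[ℝ] V)).comp A = A.comp ((ρ g : V →L[ℝ] V)) := by
    intro g
    have e1 : ((σ g : V →L[ℝ] V)).comp A = ∫ k, ((σ g : V →L[ℝ] V)).comp (f k) ∂ν := by
      have := (compL ℝ V V V ((σ g : V →L[ℝ] V))).integral_comp_comm hfi
      simpa using this.symm
    have e2 : A.comp ((ρ g : V →L[ℝ] V)) = ∫ k, (f k).comp ((ρ g : V →L[ℝ] V)) ∂ν := by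
      have := ((compL ℝ V V V).flip ((ρ g : V →L[ℝ] V))).integral_comp_comm hfi
      simpa using this.symm
    rw [e1, e2]
    set F : K → (V →L[ℝ] V) := fun k => ((σ k : V →L[ℝ] V)).comp ((ρ (k⁻¹ * g) : V →L[ℝ] V))
      with hF
    have hl : (fun k => ((σ g : V →L[ℝ] V)).comp (f k)) = fun k => F (g * k) := by
      funext k
      have h1 : (g * k)⁻¹ * g = k⁻¹ := by group
      rw [hF]
      dsimp only
      rw [h1]
      ext v
      simp only [hf, ContinuousLinearMap.comp_apply, ContinuousLinearEquiv.coe_coe, map_mul]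
      rfl
    have hr : (fun k => (f k).comp ((ρ g : V →L[ℝ] V))) = F := by
      funext k; ext v
      simp only [hf, hF, ContinuousLinearMap.comp_apply, ContinuousLinearEquiv.coe_coe, map_mul]
      rfl
    rw [hl, hr, integral_mul_left_eq_self F g]
  refine ⟨E, fun k v => ?_⟩
  have := congrArg (fun T : V →L[ℝ] V => T v) (key k)
  simp only [ContinuousLinearMap.comp_apply] at this
  rw [hEA, hEA]; exact this

/-- A continuous family of finite-dimensional real representations of a
compact group has all members pairwise conjugate. -/
theorem stmt0 {K : Type*} [Group K] [TopologicalSpace K] [IsTopologicalGroup K] [CompactSpace K]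
    {V : Type*} [NormedAddCommGroup V] [NormedSpace ℝ V] [FiniteDimensional ℝ V]
    (μ : ℝ → K →* (V ≃L[ℝ] V))
    (hcont : Continuous fun p : ℝ × K => ((μ p.1 p.2 : V →L[ℝ] V))) :
    ∀ t₁ t₂ : ℝ, ∃ A : V ≃L[ℝ] V, ∀ (k : K) (v : V),
      μ t₁ k v = A (μ t₂ k (A.symm v)) := by
  intro t₁ t₂
  -- the conjugacy relation
  set r : ℝ → ℝ → Prop := fun t s => ∃ A : V ≃L[ℝ] V, ∀ k v, μ t k (A v) = A (μ s k v) with hr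
  have hrefl : ∀ t, r t t := fun t => ⟨ContinuousLinearEquiv.refl ℝ V, fun k v => rfl⟩
  have hsymm : ∀ {t s}, r t s → r s t := by
    rintro t s ⟨A, hA⟩
    refine ⟨A.symm, fun k v => ?_⟩
    rw [ContinuousLinearEquiv.eq_symm_apply, ← hA, A.apply_symm_apply]
  have htrans : ∀ {t s u}, r t s → r s u → r t u := by
    rintro t s u ⟨A, hA⟩ ⟨B, hB⟩
    refine ⟨B.trans A, fun k v => ?_⟩
    simp only [ContinuousLinearEquiv.trans_apply]
    rw [hA, hB]
  -- continuity in each variable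
  have hc1 : ∀ t : ℝ, Continuous fun k : K => ((μ t k : V →L[ℝ] V)) := fun t =>
    hcont.comp (Continuous.prodMk_right t)
  -- openness: each class is a neighborhood of each point
  have hnbhd : ∀ t₀ : ℝ, {t | r t₀ t} ∈ nhds t₀ := by
    intro t₀
    set G : ℝ × K → ℝ := fun p =>
      ‖((μ t₀ p.2 : V →L[ℝ] V)).comp ((μ p.1 p.2⁻¹ : V →L[ℝ] V)) - 1‖ with hG
    have hGc : Continuous G := by
      apply Continuous.norm
      apply Continuous.sub _ continuous_const
      exact Continuous.clm_comp (hcont.comp ((continuous_const (y := t₀)).prodMk continuous_snd))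
        (hcont.comp (continuous_fst.prodMk (continuous_snd.inv)))
    have hU : IsOpen {p : ℝ × K | G p < 1 / 2} := isOpen_lt hGc continuous_const
    have hzero : ∀ k : K, G (t₀, k) = 0 := by
      intro k
      rw [hG]
      simp only [norm_eq_zero, sub_eq_zero]
      ext v
      simp only [ContinuousLinearMap.comp_apply, ContinuousLinearEquiv.coe_coe,
        ContinuousLinearMap.one_apply]
      calc (μ t₀ k) ((μ t₀ k⁻¹) v) = ((μ t₀ k) * (μ t₀ k⁻¹)) v := rfl
        _ = v := by rw [← map_mul, mul_inv_cancel, map_one]; rfl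
    have hsub : ({t₀} : Set ℝ) ×ˢ (Set.univ : Set K) ⊆ {p : ℝ × K | G p < 1 / 2} := by
      rintro ⟨t, k⟩ ⟨ht, -⟩
      simp only [Set.mem_singleton_iff] at ht
      rw [Set.mem_setOf_eq, ht, hzero k]
      norm_num
    obtain ⟨u, w, hu, hw, htu, hww, huw⟩ :=
      generalized_tube_lemma isCompact_singleton isCompact_univ hU hsub
    refine Filter.mem_of_superset (hu.mem_nhds (htu rfl)) ?_
    intro t ht
    have hclose : ∀ k : K, ‖((μ t₀ k : V →L[ℝ] V)).comp ((μ t k⁻¹ : V →L[ℝ] V)) - 1‖ ≤ 1 / 2 := by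
      intro k
      have hmem : (t, k) ∈ u ×ˢ w := ⟨ht, hww (Set.mem_univ k)⟩
      exact (huw hmem).le
    obtain ⟨A, hA⟩ := conj_of_close (μ t) (μ t₀) (hc1 t) (hc1 t₀) (1 / 2) (by norm_num) hclose
    exact ⟨A, hA⟩
  -- connectedness argument
  have hSopen : IsOpen {t | r t₁ t} := by
    rw [isOpen_iff_mem_nhds]
    intro t₀ ht₀
    exact Filter.mem_of_superset (hnbhd t₀) (fun t ht => htrans ht₀ ht)
  have hScopen : IsOpen {t | r t₁ t}ᶜ := by
    rw [isOpen_iff_mem_nhds]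
    intro t₀ ht₀
    refine Filter.mem_of_superset (hnbhd t₀) (fun t ht hmem => ht₀ ?_)
    exact htrans hmem (hsymm ht)
  have hclopen : IsClopen {t | r t₁ t} := ⟨⟨hScopen⟩, hSopen⟩
  have huniv : {t | r t₁ t} = Set.univ := by
    rcases isClopen_iff.mp hclopen with h | h
    · have : t₁ ∈ {t | r t₁ t} := hrefl t₁
      rw [h] at this
      exact this.elim
    · exact h
  have ht₂ : r t₁ t₂ := by
    have : t₂ ∈ {t | r t₁ t} := huniv ▸ Set.mem_univ t₂
    exact this
  obtain ⟨A, hA⟩ := ht₂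
  refine ⟨A, fun k v => ?_⟩
  conv_lhs => rw [← A.apply_symm_apply v]
  rw [hA]
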